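/- Let 0 ≤ Δ₁ ≤ Δ₂ be two tune-before-test levels. If the all-zero effort profile is a pure-strategy Nash equilibrium of the follower game induced by Δ₁, then it is also a pure-strategy Nash equilibrium of the follower game induced by Δ₂. -/
import Mathlib

/-- Key lemma: if type `t` can reach the level-`Δ₂` score of a higher type `t'`
using additional effort `x`, then it can also do so at any lower TbT level
`Δ₁ ≤ Δ₂` with the same additional effort. -/
lemma keyP (v : ℝ → ℝ → ℝ)
    (hvcont : ∀ t, Continuous (v t))
    (hC1 : ∀ e t t', t < t' → v t e < v t' e)
    (hC2mono : ∀ t, Monotone (v t))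
    (hC3 : ∀ t t', t < t' → ∀ s s', s ≤ s' →
      sInf {e | 0 ≤ e ∧ s ≤ v t e} - sInf {e | 0 ≤ e ∧ s ≤ v t' e} ≤
      sInf {e | 0 ≤ e ∧ s' ≤ v t e} - sInf {e | 0 ≤ e ∧ s' ≤ v t' e})
    (t t' Δ₁ Δ₂ x : ℝ) (htt : t < t') (hΔ₁ : 0 ≤ Δ₁) (hΔ : Δ₁ ≤ Δ₂) (hx : 0 ≤ x)
    (h : v t' Δ₂ ≤ v t (Δ₂ + x)) : v t' Δ₁ ≤ v t (Δ₁ + x) := by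
  set s := v t' Δ₁ with hs
  set s' := v t' Δ₂ with hs'
  have hss' : s ≤ s' := hC2mono t' hΔ
  have hbdd : ∀ (u σ : ℝ), BddBelow {e | 0 ≤ e ∧ σ ≤ v u e} :=
    fun u σ => ⟨0, fun e he => he.1⟩
  have hclosed : ∀ (u σ : ℝ), IsClosed {e | 0 ≤ e ∧ σ ≤ v u e} := by
    intro u σ
    have hset : {e | 0 ≤ e ∧ σ ≤ v u e} = Set.Ici 0 ∩ (v u) ⁻¹' (Set.Ici σ) := by
      ext e; simp [Set.mem_Ici, Set.mem_preimage, Set.mem_setOf_eq]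
    rw [hset]
    exact isClosed_Ici.inter (isClosed_Ici.preimage (hvcont u))
  have hmem : ∀ (u σ : ℝ), {e | 0 ≤ e ∧ σ ≤ v u e}.Nonempty →
      0 ≤ sInf {e | 0 ≤ e ∧ σ ≤ v u e} ∧
        σ ≤ v u (sInf {e | 0 ≤ e ∧ σ ≤ v u e}) := by
    intro u σ hne
    have := (hclosed u σ).csInf_mem hne (hbdd u σ)
    simpa using this
  have hne_ts : {e | 0 ≤ e ∧ s ≤ v t e}.Nonempty :=
    ⟨Δ₂ + x, ⟨by linarith, le_trans hss' h⟩⟩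
  suffices hF : sInf {e | 0 ≤ e ∧ s ≤ v t e} ≤ Δ₁ + x by
    obtain ⟨h0, hsv⟩ := hmem t s hne_ts
    calc s ≤ v t (sInf {e | 0 ≤ e ∧ s ≤ v t e}) := hsv
      _ ≤ v t (Δ₁ + x) := hC2mono t hF
  have hFt's : sInf {e | 0 ≤ e ∧ s ≤ v t' e} ≤ Δ₁ :=
    csInf_le (hbdd t' s) ⟨hΔ₁, le_refl s⟩
  by_cases hcase1 : ∃ η, 0 < η ∧ {e | 0 ≤ e ∧ s' + η ≤ v t e} = ∅
  · obtain ⟨η, hη, hemp⟩ := hcase1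
    have h3 := hC3 t t' htt s (s' + η) (by linarith)
    rw [hemp, Real.sInf_empty] at h3
    have h4 : 0 ≤ sInf {e | 0 ≤ e ∧ s' + η ≤ v t' e} :=
      Real.sInf_nonneg (fun e he => he.1)
    linarith
  · push_neg at hcase1
    set e₂ := sInf {e | 0 ≤ e ∧ s' ≤ v t' e} with he₂
    have he₂Δ : e₂ ≤ Δ₂ := csInf_le (hbdd t' s') ⟨by linarith, le_refl s'⟩
    by_cases hcase2 : Δ₂ ≤ e₂
    · -- the "no flat at the boundary" case: direct chain of inequalities
      have h3 := hC3 t t' htt s s' hss'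
      have hFts' : sInf {e | 0 ≤ e ∧ s' ≤ v t e} ≤ Δ₂ + x :=
        csInf_le (hbdd t s') ⟨by linarith, h⟩
      linarith
    · -- impossible case: `v t'` flat at level `s'` just below `Δ₂`.
      exfalso
      push_neg at hcase2
      have hδ : 0 < Δ₂ - e₂ := by linarith
      -- an increasing sequence of intermediate types in (t, t')
      set u : ℕ → ℝ := fun k => t' - (t' - t) / ((k : ℝ) + 2) with hu
      have htt' : (0:ℝ) < t' - t := by linarith
      have hden : ∀ k : ℕ, (0:ℝ) < (k : ℝ) + 2 := by
        intro k; positivity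
      have htu : ∀ k, t < u k := by
        intro k
        have h1 : (t' - t) / ((k : ℝ) + 2) < t' - t := by
          apply div_lt_self htt'
          have : (0:ℝ) ≤ (k : ℝ) := Nat.cast_nonneg k
          linarith
        simp only [hu]
        linarith
      have hut' : ∀ k, u k < t' := by
        intro k
        have h1 : 0 < (t' - t) / ((k : ℝ) + 2) := div_pos htt' (hden k)
        simp only [hu]
        linarith
      have huinc : ∀ k, u k < u (k + 1) := by
        intro k
        have h1 : (t' - t) / (((k : ℝ) + 1) + 2) < (t' - t) / ((k : ℝ) + 2) := by
          apply div_lt_div_of_pos_left htt' (hden k)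
          linarith
        simp only [hu]
        push_cast
        linarith
      have hneu : ∀ k, {e | 0 ≤ e ∧ s' ≤ v (u k) e}.Nonempty := by
        intro k
        exact ⟨Δ₂ + x, ⟨by linarith, le_trans h (le_of_lt (hC1 _ _ _ (htu k)))⟩⟩
      -- each successive intermediate type reaches level s' at least δ = Δ₂ - e₂ earlier
      have hstep : ∀ k : ℕ, sInf {e | 0 ≤ e ∧ s' ≤ v (u (k+1)) e} ≤
          sInf {e | 0 ≤ e ∧ s' ≤ v (u k) e} - (Δ₂ - e₂) := by
        intro k
        set A := sInf {e | 0 ≤ e ∧ s' ≤ v (u k) e} with hA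
        obtain ⟨hA0, hAs⟩ := hmem (u k) s' (hneu k)
        set η₀ := v (u (k+1)) A - s' with hη₀
        have hη₀pos : 0 < η₀ := by
          have h5 := hC1 A (u k) (u (k+1)) (huinc k)
          simp only [hη₀]
          linarith
        have h3 := hC3 (u (k+1)) t' (hut' (k+1)) s' (s' + η₀) (by linarith)
        have h5 : sInf {e | 0 ≤ e ∧ s' + η₀ ≤ v (u (k+1)) e} ≤ A := by
          apply csInf_le (hbdd _ _)
          exact ⟨hA0, by simp only [hη₀]; linarith⟩
        have h6 : Δ₂ ≤ sInf {e | 0 ≤ e ∧ s' + η₀ ≤ v t' e} := by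
          apply le_csInf
          · refine ⟨A, hA0, ?_⟩
            have h7 := hC1 A (u (k+1)) t' (hut' (k+1))
            simp only [hη₀]
            linarith
          · intro e he
            by_contra hlt
            push_neg at hlt
            have h8 : v t' e ≤ s' := hC2mono t' (le_of_lt hlt)
            have h9 := he.2
            linarith
        linarith
      have hbound : ∀ k : ℕ, sInf {e | 0 ≤ e ∧ s' ≤ v (u k) e} ≤
          (Δ₂ + x) - (k : ℝ) * (Δ₂ - e₂) := by
        intro k
        induction k with
        | zero =>
          simp only [Nat.cast_zero, zero_mul, sub_zero]
          refine csInf_le (hbdd _ _) ⟨by linarith, ?_⟩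
          exact le_trans h (le_of_lt (hC1 _ _ _ (htu 0)))
        | succ m ih =>
          have h10 := hstep m
          push_cast
          push_cast at ih
          linarith
      obtain ⟨N, hN⟩ := exists_nat_gt ((Δ₂ + x) / (Δ₂ - e₂))
      have h0N : 0 ≤ sInf {e | 0 ≤ e ∧ s' ≤ v (u N) e} :=
        Real.sInf_nonneg (fun e he => he.1)
      have hBN := hbound N
      rw [div_lt_iff₀ hδ] at hN
      linarith

/-- The all-zero additional-effort profile is a pure-strategy Nash equilibrium
of the follower game induced by TbT level `Δ` (0-indexed ranks
`rank(i) = #{j : vⱼ > vᵢ}`, utility `R(rank(i)) − c(eᵢ)`). -/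
def zeroIsPNE {n : ℕ} (θ : Fin n → ℝ) (v : ℝ → ℝ → ℝ) (c : ℝ → ℝ) (R : ℕ → ℝ)
    (Δ : ℝ) : Prop :=
  ∀ i : Fin n, ∀ x, 0 ≤ x →
    R ((Finset.univ.filter (fun j =>
        v (θ i) (Δ + x) < v (θ j) (Δ + Function.update (fun _ => (0:ℝ)) i x j))).card)
      - c x ≤
    R ((Finset.univ.filter (fun j => v (θ i) Δ < v (θ j) Δ)).card) - c 0

/-- Monotone stabilizing effect of TbT. For TbT levels
`0 ≤ Δ₁ ≤ Δ₂`, if the all-zero effort profile is a pure-strategy Nash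
equilibrium of the follower game induced by `Δ₁`, then it is also a
pure-strategy Nash equilibrium of the follower game induced by `Δ₂`. -/
theorem stmt8 {n : ℕ} (θ : Fin n → ℝ) (v : ℝ → ℝ → ℝ) (c : ℝ → ℝ) (R : ℕ → ℝ)
    (Δ₁ Δ₂ : ℝ) (hΔ₁ : 0 ≤ Δ₁) (hΔ : Δ₁ ≤ Δ₂)
    (hθ : StrictAnti θ)
    (hcmono : Monotone c) (hcconv : ConvexOn ℝ (Set.Ici 0) c) (hc0 : c 0 = 0)
    (hvcont : ∀ t, Continuous (v t))
    (hC1 : ∀ e t t', t < t' → v t e < v t' e)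
    (hC2mono : ∀ t, Monotone (v t))
    (hC3 : ∀ t t', t < t' → ∀ s s', s ≤ s' →
      sInf {e | 0 ≤ e ∧ s ≤ v t e} - sInf {e | 0 ≤ e ∧ s ≤ v t' e} ≤
      sInf {e | 0 ≤ e ∧ s' ≤ v t e} - sInf {e | 0 ≤ e ∧ s' ≤ v t' e})
    (hR : Antitone R)
    (h1 : zeroIsPNE θ v c R Δ₁) :
    zeroIsPNE θ v c R Δ₂ := by
  intro i x hx
  -- (1) the update-profile ranking set simplifies: everyone else has effort 0
  have hupd : ∀ Δ : ℝ,
      Finset.univ.filter (fun j =>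
        v (θ i) (Δ + x) < v (θ j) (Δ + Function.update (fun _ => (0:ℝ)) i x j)) =
      Finset.univ.filter (fun j => v (θ i) (Δ + x) < v (θ j) Δ) := by
    intro Δ
    ext j
    simp only [Finset.mem_filter, Finset.mem_univ, true_and]
    rcases eq_or_ne j i with rfl | hne
    · rw [Function.update_self]
      constructor
      · intro hlt; exact absurd hlt (lt_irrefl _)
      · intro hlt
        exact absurd (lt_of_lt_of_le hlt (hC2mono (θ j) (by linarith))) (lt_irrefl _)
    · rw [Function.update_of_ne hne, add_zero]
  -- (2) at zero effort, ranks do not depend on Δ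
  have hzero : ∀ Δ : ℝ,
      Finset.univ.filter (fun j => v (θ i) Δ < v (θ j) Δ) =
      Finset.univ.filter (fun j : Fin n => θ i < θ j) := by
    intro Δ
    ext j
    simp only [Finset.mem_filter, Finset.mem_univ, true_and]
    constructor
    · intro hv
      rcases lt_trichotomy (θ i) (θ j) with h' | h' | h'
      · exact h'
      · exact absurd hv (by rw [h']; exact lt_irrefl _)
      · exact absurd (hC1 Δ _ _ h') (lt_asymm hv)
    · exact fun h' => hC1 Δ _ _ h'
  -- (3) whoever is still ahead after the deviation at Δ₁ is still ahead at Δ₂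
  have hB : Finset.univ.filter (fun j => v (θ i) (Δ₁ + x) < v (θ j) Δ₁) ⊆
      Finset.univ.filter (fun j => v (θ i) (Δ₂ + x) < v (θ j) Δ₂) := by
    intro j hj
    simp only [Finset.mem_filter, Finset.mem_univ, true_and] at hj ⊢
    by_contra hnot
    push_neg at hnot
    have hpt : v (θ i) (Δ₁ + x) < v (θ j) (Δ₁ + x) :=
      lt_of_lt_of_le hj (hC2mono (θ j) (by linarith))
    have hij : θ i < θ j := by
      rcases lt_trichotomy (θ i) (θ j) with h' | h' | h'
      · exact h'
      · exact absurd hpt (by rw [h']; exact lt_irrefl _)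
      · exact absurd (hC1 (Δ₁ + x) _ _ h') (lt_asymm hpt)
    have hkey := keyP v hvcont hC1 hC2mono hC3 (θ i) (θ j) Δ₁ Δ₂ x hij hΔ₁ hΔ hx hnot
    linarith
  have h1' := h1 i x hx
  rw [hupd Δ₁, hzero Δ₁] at h1'
  rw [hupd Δ₂, hzero Δ₂]
  have hcard : (Finset.univ.filter (fun j => v (θ i) (Δ₁ + x) < v (θ j) Δ₁)).card ≤
      (Finset.univ.filter (fun j => v (θ i) (Δ₂ + x) < v (θ j) Δ₂)).card :=
    Finset.card_le_card hB
  have hRle := hR hcard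
  linarith
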